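/- Let G be a topological group whose underlying topological space is a Baire space, and let A be a subset of G that is almost open (Baire measurable), i.e., there is an open set U in G such that the symmetric difference A △ U is meager. If A is not meager, then the set A · A⁻¹ = { a b⁻¹ : a, b ∈ A } is a neighborhood of the identity element of G. -/

import Mathlib

open Pointwise

lemma isMeagre_union' {X : Type*} [TopologicalSpace X] {s t : Set X}
    (hs : IsMeagre s) (ht : IsMeagre t) : IsMeagre (s ∪ t) := by
  rw [IsMeagre, Set.compl_union]
  exact Filter.inter_mem hs ht

lemma isMeagre_smul' {G : Type*} [TopologicalSpace G] [Group G] [IsTopologicalGroup G]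
    (g : G) {s : Set G} (hs : IsMeagre s) : IsMeagre (g • s) := by
  have : g • s = (fun x => g⁻¹ • x) ⁻¹' s := by
    rw [Set.preimage_smul, inv_inv]
  rw [this]
  exact hs.preimage_of_isOpenMap (continuous_const_smul _)
    (Homeomorph.mulLeft g⁻¹).isOpenMap

lemma not_isMeagre_of_isOpen_nonempty {X : Type*} [TopologicalSpace X] [BaireSpace X]
    {U : Set X} (hU : IsOpen U) (hne : U.Nonempty) : ¬ IsMeagre U := by
  intro h
  have hd : Dense Uᶜ := dense_of_mem_residual h
  have : Uᶜ = Set.univ := hU.isClosed_compl.closure_eq ▸ hd.closure_eq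
  obtain ⟨x, hx⟩ := hne
  have : x ∈ Uᶜ := this ▸ Set.mem_univ x
  exact this hx

/-- In a Baire topological group, if `A` is almost open (Baire measurable) and
non-meager, then `A * A⁻¹` is a neighborhood of the identity. -/
theorem mul_inv_mem_nhds_one_of_almost_open_nonmeager
    {G : Type*} [TopologicalSpace G] [Group G] [IsTopologicalGroup G] [BaireSpace G]
    (A : Set G)
    (hao : ∃ U : Set G, IsOpen U ∧ IsMeagre ((A \ U) ∪ (U \ A)))
    (hnm : ¬ IsMeagre A) :
    A * A⁻¹ ∈ nhds (1 : G) := by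
  obtain ⟨U, hUopen, hUm⟩ := hao
  have hAU : IsMeagre (A \ U) := hUm.mono Set.subset_union_left
  have hUA : IsMeagre (U \ A) := hUm.mono Set.subset_union_right
  -- U is nonempty
  have hUne : U.Nonempty := by
    rcases Set.eq_empty_or_nonempty U with h | h
    · exfalso; apply hnm
      refine (isMeagre_union' hAU hUA).mono ?_
      intro x hx
      by_cases hU : x ∈ U
      · exact Or.inr ⟨hU, fun h' => (h ▸ hU : x ∈ (∅ : Set G)).elim⟩
      · exact Or.inl ⟨hx, hU⟩
    · exact h
  -- key claim: U * U⁻¹ ⊆ A * A⁻¹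
  have key : U * U⁻¹ ⊆ A * A⁻¹ := by
    rintro g ⟨u, hu, v, hv, rfl⟩
    have hv' : v⁻¹ ∈ U := hv
    set g := u * v with hg
    have hmem : u ∈ (g • U) ∩ U := by
      constructor
      · exact ⟨v⁻¹, hv', by simp [hg, mul_assoc]⟩
      · exact hu
    have hopen : IsOpen ((g • U) ∩ U) := (hUopen.smul g).inter hUopen
    have hnmeag : ¬ IsMeagre ((g • U) ∩ U) :=
      not_isMeagre_of_isOpen_nonempty hopen ⟨u, hmem⟩
    -- (g•A) ∩ A is nonempty
    have hne : ((g • A) ∩ A).Nonempty := by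
      by_contra hconta
      rw [Set.not_nonempty_iff_eq_empty] at hconta
      apply hnmeag
      refine (isMeagre_union' (isMeagre_smul' g hUA) hUA).mono ?_
      rintro x ⟨hxgU, hxU⟩
      by_cases hxgA : x ∈ g • A
      · by_cases hxA : x ∈ A
        · exact absurd (hconta ▸ (⟨hxgA, hxA⟩ : x ∈ (g • A) ∩ A)) (Set.notMem_empty x)
        · exact Or.inr ⟨hxU, hxA⟩
      · left
        rw [Set.smul_set_sdiff]
        exact ⟨hxgU, hxgA⟩
    obtain ⟨x, ⟨b, hb, rfl⟩, hxA⟩ := hne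
    exact ⟨g * b, hxA, b⁻¹, Set.inv_mem_inv.mpr hb, by simp [hg]⟩

  obtain ⟨u, hu⟩ := hUne
  have h1 : (1 : G) ∈ U * U⁻¹ := ⟨u, hu, u⁻¹, Set.inv_mem_inv.mpr hu, mul_inv_cancel u⟩
  exact Filter.mem_of_superset ((hUopen.mul_right).mem_nhds h1) key
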